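/- Let d be a positive integer, let p_c ∈ (0, 1/2] and let p ∈ (1/(2d), p_c). If q ∈ [0,1] satisfies q ≥ 8d²(p_c - p), then r := p + (1 - (1-q)^(1/(2d)))·p·(1-p) > p_c. -/
import Mathlib

theorem key_arithmetic_estimate (d : ℕ) (hd : 0 < d) (p_c p q : ℝ)
    (hpc0 : 0 < p_c) (hpc1 : p_c ≤ 1 / 2)
    (hp1 : 1 / (2 * d) < p) (hp2 : p < p_c)
    (hq0 : 0 ≤ q) (hq1 : q ≤ 1)
    (hq : q ≥ 8 * d ^ 2 * (p_c - p)) :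
    p + (1 - (1 - q) ^ ((1 : ℝ) / (2 * d))) * p * (1 - p) > p_c := by
  have hd1 : (1 : ℝ) ≤ d := by exact_mod_cast hd
  have h2d : (0 : ℝ) < 2 * d := by linarith
  have hα0 : (0 : ℝ) ≤ 1 / (2 * d) := by positivity
  have hα1 : (1 : ℝ) / (2 * d) ≤ 1 := by rw [div_le_one h2d]; linarith
  have hp0 : 0 < p := lt_trans (by positivity) hp1
  have h1p : 1 / 2 ≤ 1 - p := by linarith
  have hbern : (1 - q) ^ ((1 : ℝ) / (2 * d)) ≤ 1 - (1 / (2 * d)) * q := by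
    have := rpow_one_add_le_one_add_mul_self (s := -q) (by linarith) hα0 hα1
    have h1 : (1 : ℝ) + -q = 1 - q := by ring
    have h2 : (1 : ℝ) + 1 / (2 * d) * -q = 1 - 1 / (2 * d) * q := by ring
    rw [h1, h2] at this; exact this
  have hterm : (1 / (2 * d)) * q ≤ 1 - (1 - q) ^ ((1 : ℝ) / (2 * d)) := by linarith
  have hpq : 0 < p * (1 - p) := by nlinarith
  have key : (1 - (1 - q) ^ ((1 : ℝ) / (2 * d))) * p * (1 - p)
      ≥ (1 / (2 * d)) * q * p * (1 - p) := by nlinarith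
  have hqpos : 0 < q := lt_of_lt_of_le (mul_pos (by nlinarith : (0:ℝ) < 8 * (d:ℝ)^2) (sub_pos.mpr hp2)) hq
  have hfin : (1 / (2 * d)) * q * p * (1 - p) > p_c - p := by
    have h1 : (1 / (2 * d)) * q * p * (1 - p) > (1 / (2 * d)) * q * (1 / (2 * d)) * (1 - p) := by
      have := mul_pos (mul_pos (div_pos one_pos h2d) hqpos)
        (lt_of_lt_of_le one_half_pos h1p)
      nlinarith
    have h2 : (1 / (2 * d)) * q * (1 / (2 * d)) * (1 - p)
        ≥ (1 / (2 * d)) * (8 * d ^ 2 * (p_c - p)) * (1 / (2 * d)) * (1 / 2) := by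
      have hα : 0 < 1 / (2 * (d:ℝ)) := div_pos one_pos h2d
      have hB : q * (1 - p) ≥ 8 * (d:ℝ) ^ 2 * (p_c - p) * (1 / 2) := by
        nlinarith [mul_nonneg hq0 (by linarith : (0:ℝ) ≤ 1 - p - 1 / 2)]
      nlinarith [mul_le_mul_of_nonneg_left hB (mul_pos hα hα).le]
    have h3 : (1 / (2 * d)) * (8 * d ^ 2 * (p_c - p)) * (1 / (2 * d)) * (1 / 2)
        = p_c - p := by field_simp; ring
    linarith
  linarith
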